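/- Let q be a real number with q > 0 and q ≠ 1, let k ≥ 1 and n be natural numbers, and let x_1, …, x_k be real numbers. Then Σ C_q(n; r_1,…,r_k) · ∏_{j=1}^{k} [ x_j^{n − s_j} · ∏_{i=1}^{r_j} (1 − x_j q^{i−1}) ] = 1, where the sum is over all tuples (r_1,…,r_k) of natural numbers with r_1 + ⋯ + r_k ≤ n, and s_j = r_1 + ⋯ + r_j. -/

import Mathlib

noncomputable def qNum (q : ℝ) (m : ℤ) : ℝ := (1 - q ^ m) / (1 - q)

noncomputable def qFactorial (q : ℝ) (n : ℕ) : ℝ :=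
  ∏ i ∈ Finset.range n, qNum q ((i : ℤ) + 1)

noncomputable def qFacOrd (q : ℝ) (x : ℤ) (r : ℕ) : ℝ :=
  ∏ i ∈ Finset.range r, qNum q (x - (i : ℤ))

noncomputable def qMultinomial (q : ℝ) (x : ℤ) {k : ℕ} (r : Fin k → ℕ) : ℝ :=
  qFacOrd q x (∑ j, r j) / ∏ j, qFactorial q (r j)

section Aux

variable {q : ℝ}

lemma qNum_ne_zero (hq : 0 < q) (hq1 : q ≠ 1) {m : ℤ} (hm : m ≠ 0) : qNum q m ≠ 0 := by
  apply div_ne_zero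
  · intro h
    apply hm
    have h1 : q ^ m = q ^ (0 : ℤ) := by
      rw [zpow_zero]; linarith [sub_eq_zero.mp h]
    exact zpow_right_injective₀ hq hq1 h1
  · exact sub_ne_zero.mpr fun h => hq1 h.symm

lemma qFactorial_ne_zero (hq : 0 < q) (hq1 : q ≠ 1) (n : ℕ) : qFactorial q n ≠ 0 := by
  refine Finset.prod_ne_zero_iff.mpr fun i _ => qNum_ne_zero hq hq1 ?_
  positivity

/-- Splitting `qNum`: `[x] = [r] + q^r [x - r]`. -/
lemma qNum_split (hq : 0 < q) (x : ℤ) (r : ℕ) :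
    qNum q x = qNum q (r : ℤ) + q ^ r * qNum q (x - r) := by
  have hq0 : q ≠ 0 := ne_of_gt hq
  unfold qNum
  rw [← mul_div_assoc, ← add_div]
  congr 1
  have h1 : q ^ (x : ℤ) = q ^ (r : ℕ) * q ^ (x - (r : ℤ)) := by
    rw [← zpow_natCast q r, ← zpow_add₀ hq0]; congr 1; ring
  rw [h1, zpow_natCast]; ring

lemma qFacOrd_succ (x : ℤ) (r : ℕ) :
    qFacOrd q x (r + 1) = qFacOrd q x r * qNum q (x - r) := Finset.prod_range_succ _ r

lemma qFacOrd_succ' (x : ℤ) (r : ℕ) :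
    qFacOrd q x (r + 1) = qNum q x * qFacOrd q (x - 1) r := by
  unfold qFacOrd
  rw [Finset.prod_range_succ', mul_comm]
  simp only [Nat.cast_zero, sub_zero]
  congr 1
  refine Finset.prod_congr rfl fun i _ => ?_
  congr 1; push_cast; ring

lemma qFactorial_succ (r : ℕ) :
    qFactorial q (r + 1) = qFactorial q r * qNum q ((r : ℤ) + 1) := Finset.prod_range_succ _ r

lemma qFacOrd_add (x : ℤ) (r s : ℕ) :
    qFacOrd q x (r + s) = qFacOrd q x r * qFacOrd q (x - r) s := by
  unfold qFacOrd
  rw [Finset.prod_range_add]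
  congr 1
  refine Finset.prod_congr rfl fun i _ => ?_
  congr 1; push_cast; ring

lemma qFacOrd_natCast_eq_zero (n : ℕ) {r : ℕ} (h : n < r) : qFacOrd q (n : ℤ) r = 0 := by
  refine Finset.prod_eq_zero (Finset.mem_range.mpr h) ?_
  simp [qNum]

/-- The `q`-binomial coefficient `[x]_{r,q} / [r]_q!`. -/
noncomputable def qBinom (q : ℝ) (x : ℤ) (r : ℕ) : ℝ := qFacOrd q x r / qFactorial q r

/-- Pascal-type recurrence for the `q`-binomial coefficient. -/
lemma qBinom_pascal (hq : 0 < q) (hq1 : q ≠ 1) (x : ℤ) (r : ℕ) :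
    qBinom q x (r + 1) = qBinom q (x - 1) r + q ^ (r + 1) * qBinom q (x - 1) (r + 1) := by
  have hfac : qFactorial q r ≠ 0 := qFactorial_ne_zero hq hq1 r
  have hnum : qNum q ((r : ℤ) + 1) ≠ 0 := qNum_ne_zero hq hq1 (by positivity)
  have harg : x - 1 - (r : ℤ) = x - ((r : ℕ) + 1 : ℕ) := by push_cast; ring
  unfold qBinom
  rw [qFacOrd_succ', qFacOrd_succ, qFactorial_succ, harg,
    qNum_split hq x (r + 1)]
  rw [show (((r + 1 : ℕ) : ℤ)) = (r : ℤ) + 1 by push_cast; ring]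
  field_simp

/-- The `q`-binomial theorem in the telescoping form
`Σ_r C_q(n,r) x^(n−r) Π_{i<r} (1 − x q^i) = 1`. -/
lemma one_var (hq : 0 < q) (hq1 : q ≠ 1) (x : ℝ) (n : ℕ) :
    ∑ r ∈ Finset.range (n + 1),
      qBinom q (n : ℤ) r * (x ^ (n - r) * ∏ i ∈ Finset.range r, (1 - x * q ^ i)) = 1 := by
  induction n with
  | zero => simp [qBinom, qFacOrd, qFactorial]
  | succ n ih =>
    set P : ℕ → ℝ := fun r => ∏ i ∈ Finset.range r, (1 - x * q ^ i) with hP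
    have hB0 : ∀ m : ℤ, qBinom q m 0 = 1 := by
      intro m; simp [qBinom, qFacOrd, qFactorial]
    set v : ℕ → ℝ := fun r => q ^ r * qBinom q (n : ℤ) r * (x ^ (n + 1 - r) * P r) with hv
    have h1 : ∀ r ∈ Finset.range (n + 1),
        qBinom q ((n + 1 : ℕ) : ℤ) (r + 1) * (x ^ (n + 1 - (r + 1)) * P (r + 1)) =
          qBinom q (n : ℤ) r * (x ^ (n - r) * P (r + 1)) + v (r + 1) := by
      intro r _
      have : ((n + 1 : ℕ) : ℤ) = ((n : ℤ) + 1) := by push_cast; ring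
      rw [this, qBinom_pascal hq hq1 ((n : ℤ) + 1) r, add_sub_cancel_right]
      simp only [hv, Nat.add_sub_add_right]
      ring
    have h3 : v (n + 1) = 0 := by
      simp [hv, qBinom, qFacOrd_natCast_eq_zero n (Nat.lt_succ_self n)]
    have h4 : ∀ r ∈ Finset.range (n + 1),
        qBinom q (n : ℤ) r * (x ^ (n - r) * P (r + 1)) + v r =
          qBinom q (n : ℤ) r * (x ^ (n - r) * P r) := by
      intro r hr
      have hr' : r ≤ n := Nat.lt_succ_iff.mp (Finset.mem_range.mp hr)
      have hpow : n + 1 - r = (n - r) + 1 := by omega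
      simp only [hv, hpow, pow_succ, hP, Finset.prod_range_succ]
      ring
    calc ∑ r ∈ Finset.range (n + 1 + 1),
          qBinom q ((n + 1 : ℕ) : ℤ) r * (x ^ (n + 1 - r) * P r)
        = (∑ r ∈ Finset.range (n + 1),
            qBinom q ((n + 1 : ℕ) : ℤ) (r + 1) * (x ^ (n + 1 - (r + 1)) * P (r + 1)))
            + qBinom q ((n + 1 : ℕ) : ℤ) 0 * (x ^ (n + 1 - 0) * P 0) :=
        Finset.sum_range_succ' _ (n + 1)
      _ = (∑ r ∈ Finset.range (n + 1),
            (qBinom q (n : ℤ) r * (x ^ (n - r) * P (r + 1)) + v (r + 1))) + v 0 := by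
          rw [Finset.sum_congr rfl h1]
          congr 1
          simp [hv, hB0, hP]
      _ = (∑ r ∈ Finset.range (n + 1), qBinom q (n : ℤ) r * (x ^ (n - r) * P (r + 1)))
            + ((∑ r ∈ Finset.range (n + 1), v (r + 1)) + v 0) := by
          rw [Finset.sum_add_distrib]; ring
      _ = (∑ r ∈ Finset.range (n + 1), qBinom q (n : ℤ) r * (x ^ (n - r) * P (r + 1)))
            + ∑ r ∈ Finset.range (n + 1 + 1), v r := by
          rw [Finset.sum_range_succ' v (n + 1)]
      _ = (∑ r ∈ Finset.range (n + 1), qBinom q (n : ℤ) r * (x ^ (n - r) * P (r + 1)))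
            + ∑ r ∈ Finset.range (n + 1), v r := by
          rw [Finset.sum_range_succ v (n + 1), h3, add_zero]
      _ = ∑ r ∈ Finset.range (n + 1), qBinom q (n : ℤ) r * (x ^ (n - r) * P r) := by
          rw [← Finset.sum_add_distrib]; exact Finset.sum_congr rfl h4
      _ = 1 := ih

lemma qMultinomial_cons {k : ℕ} (n : ℤ) (a : ℕ) (t : Fin k → ℕ) :
    qMultinomial q n (Fin.cons a t) = qBinom q n a * qMultinomial q (n - a) t := by
  unfold qMultinomial qBinom
  rw [Fin.sum_cons, qFacOrd_add, Fin.prod_univ_succ]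
  simp only [Fin.cons_zero, Fin.cons_succ]
  rw [mul_div_mul_comm]

lemma qMultinomial_eq_zero {k : ℕ} (n : ℕ) (r : Fin k → ℕ) (h : n < ∑ j, r j) :
    qMultinomial q (n : ℤ) r = 0 := by
  unfold qMultinomial
  rw [qFacOrd_natCast_eq_zero n h, zero_div]

lemma partial_sum_succ {k : ℕ} (f : Fin (k + 1) → ℕ) (j : Fin k) :
    ∑ i' ∈ Finset.univ.filter (fun i' => i' ≤ Fin.succ j), f i' =
      f 0 + ∑ i' ∈ Finset.univ.filter (fun i' => i' ≤ j), f (Fin.succ i') := by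
  rw [Finset.sum_filter, Finset.sum_filter, Fin.sum_univ_succ]
  simp [Fin.succ_le_succ_iff, Fin.zero_le]

lemma partial_sum_zero {k : ℕ} (f : Fin (k + 1) → ℕ) :
    ∑ i' ∈ Finset.univ.filter (fun i' => i' ≤ (0 : Fin (k + 1))), f i' = f 0 := by
  rw [Finset.sum_filter, Fin.sum_univ_succ]
  simp [Fin.le_zero_iff, Fin.succ_ne_zero]

/-- The main identity, summing over ℕ-valued tuples. -/
lemma multi (hq : 0 < q) (hq1 : q ≠ 1) :
    ∀ (k : ℕ) (n : ℕ) (x : Fin k → ℝ),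
      ∑ r ∈ Fintype.piFinset (fun _ : Fin k => Finset.range (n + 1)),
        qMultinomial q (n : ℤ) r *
          ∏ j, x j ^ (n - ∑ i' ∈ Finset.univ.filter (fun i' => i' ≤ j), r i') *
            ∏ i ∈ Finset.range (r j), (1 - x j * q ^ i) = 1 := by
  intro k
  induction k with
  | zero =>
    intro n x
    simp [qMultinomial, qFacOrd, qFactorial]
  | succ k ih =>
    intro n x
    have key : ∀ a ∈ Finset.range (n + 1), ∀ t ∈ Fintype.piFinset (fun _ : Fin k => Finset.range (n + 1)),
        (qMultinomial q (n : ℤ) ((Fin.cons a t : Fin (k + 1) → ℕ)) *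
          ∏ j, x j ^ (n - ∑ i' ∈ Finset.univ.filter (fun i' => i' ≤ j), (Fin.cons a t : Fin (k + 1) → ℕ) i') *
            ∏ i ∈ Finset.range ((Fin.cons a t : Fin (k + 1) → ℕ) j), (1 - x j * q ^ i)) =
        (qBinom q (n : ℤ) a * (x 0 ^ (n - a) * ∏ i ∈ Finset.range a, (1 - x 0 * q ^ i))) *
          (qMultinomial q ((n - a : ℕ) : ℤ) t *
            ∏ j : Fin k, x (Fin.succ j) ^ ((n - a) - ∑ i' ∈ Finset.univ.filter (fun i' => i' ≤ j), t i') *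
              ∏ i ∈ Finset.range (t j), (1 - x (Fin.succ j) * q ^ i)) := by
      intro a ha t _
      have ha' : a ≤ n := Nat.lt_succ_iff.mp (Finset.mem_range.mp ha)
      rw [qMultinomial_cons, Fin.prod_univ_succ]
      simp only [Fin.cons_zero, Fin.cons_succ, partial_sum_zero, partial_sum_succ,
        Nat.sub_add_eq]
      rw [Nat.cast_sub ha']
      ring
    have inner : ∀ a ∈ Finset.range (n + 1),
        (∑ t ∈ Fintype.piFinset (fun _ : Fin k => Finset.range (n + 1)),
          qMultinomial q ((n - a : ℕ) : ℤ) t *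
            ∏ j : Fin k, x (Fin.succ j) ^ ((n - a) - ∑ i' ∈ Finset.univ.filter (fun i' => i' ≤ j), t i') *
              ∏ i ∈ Finset.range (t j), (1 - x (Fin.succ j) * q ^ i)) = 1 := by
      intro a _
      have hsub : Fintype.piFinset (fun _ : Fin k => Finset.range (n - a + 1)) ⊆
          Fintype.piFinset (fun _ : Fin k => Finset.range (n + 1)) :=
        Fintype.piFinset_subset _ _ fun _ => Finset.range_subset_range.mpr (by omega)
      have hzero : ∀ t ∈ Fintype.piFinset (fun _ : Fin k => Finset.range (n + 1)),
          t ∉ Fintype.piFinset (fun _ : Fin k => Finset.range (n - a + 1)) →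
          qMultinomial q ((n - a : ℕ) : ℤ) t *
            ∏ j : Fin k, x (Fin.succ j) ^ ((n - a) - ∑ i' ∈ Finset.univ.filter (fun i' => i' ≤ j), t i') *
              ∏ i ∈ Finset.range (t j), (1 - x (Fin.succ j) * q ^ i) = 0 := by
        intro t _ htn
        have : ∃ j, ¬ t j ∈ Finset.range (n - a + 1) := by
          by_contra hc
          push_neg at hc
          exact htn (Fintype.mem_piFinset.mpr hc)
        obtain ⟨j, hj⟩ := this
        rw [Finset.mem_range, not_lt] at hj
        have hlt : (n - a) < ∑ j', t j' :=
          lt_of_lt_of_le (by omega) (Finset.single_le_sum (fun _ _ => Nat.zero_le _) (Finset.mem_univ j))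
        rw [qMultinomial_eq_zero _ _ hlt, zero_mul]
      rw [← Finset.sum_subset hsub hzero]
      exact ih (n - a) (fun j => x (Fin.succ j))
    have hmap : Fintype.piFinset (fun _ : Fin (k + 1) => Finset.range (n + 1)) =
        ((Finset.range (n + 1)) ×ˢ Fintype.piFinset (fun _ : Fin k => Finset.range (n + 1))).map
          (Fin.consEquiv _).toEmbedding := by
      have h := Finset.filter_piFinset_eq_map_consEquiv
        (fun _ : Fin (k + 1) => Finset.range (n + 1)) (fun _ => True)
      simp at h
      exact h
    rw [hmap, Finset.sum_map, Finset.sum_product]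
    simp only [Equiv.coe_toEmbedding, Fin.consEquiv_apply]
    calc ∑ a ∈ Finset.range (n + 1), ∑ t ∈ Fintype.piFinset (fun _ : Fin k => Finset.range (n + 1)),
          qMultinomial q (n : ℤ) ((Fin.cons a t : Fin (k + 1) → ℕ)) *
            ∏ j, x j ^ (n - ∑ i' ∈ Finset.univ.filter (fun i' => i' ≤ j), (Fin.cons a t : Fin (k + 1) → ℕ) i') *
              ∏ i ∈ Finset.range ((Fin.cons a t : Fin (k + 1) → ℕ) j), (1 - x j * q ^ i)
        = ∑ a ∈ Finset.range (n + 1),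
            (qBinom q (n : ℤ) a * (x 0 ^ (n - a) * ∏ i ∈ Finset.range a, (1 - x 0 * q ^ i))) *
            ∑ t ∈ Fintype.piFinset (fun _ : Fin k => Finset.range (n + 1)),
              qMultinomial q ((n - a : ℕ) : ℤ) t *
                ∏ j : Fin k, x (Fin.succ j) ^ ((n - a) - ∑ i' ∈ Finset.univ.filter (fun i' => i' ≤ j), t i') *
                  ∏ i ∈ Finset.range (t j), (1 - x (Fin.succ j) * q ^ i) := by
            refine Finset.sum_congr rfl fun a ha => ?_
            rw [Finset.mul_sum]
            exact Finset.sum_congr rfl fun t ht => key a ha t ht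
      _ = ∑ a ∈ Finset.range (n + 1),
            qBinom q (n : ℤ) a * (x 0 ^ (n - a) * ∏ i ∈ Finset.range a, (1 - x 0 * q ^ i)) := by
            refine Finset.sum_congr rfl fun a ha => ?_
            rw [inner a ha, mul_one]
      _ = 1 := one_var hq hq1 (x 0) n

end Aux

/-- First identity of Corollary 2.1 (q-case):
    Σ_{r, Σr_j ≤ n} C_q(n; r) ∏_j x_j^(n−s_j) ∏_{i=1}^{r_j} (1 − x_j q^(i−1)) = 1. -/
theorem qMultinomial_sum_one (q : ℝ) (hq : 0 < q) (hq1 : q ≠ 1)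
    (k n : ℕ) (hk : 1 ≤ k) (x : Fin k → ℝ) :
    ∑ r ∈ Finset.univ.filter (fun r : Fin k → Fin (n + 1) => ∑ j, (r j : ℕ) ≤ n),
      qMultinomial q (n : ℤ) (fun j => (r j : ℕ)) *
        ∏ j : Fin k,
          x j ^ (n - ∑ i' ∈ Finset.univ.filter (fun i' => i' ≤ j), (r i' : ℕ)) *
            ∏ i ∈ Finset.range (r j : ℕ), (1 - x j * q ^ i) = 1 := by
  rw [Finset.sum_subset (Finset.filter_subset _ Finset.univ) (fun r _ hr => by
    rw [Finset.mem_filter, not_and] at hr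
    have hlt : n < ∑ j, (r j : ℕ) := Nat.lt_of_not_le (hr (Finset.mem_univ r))
    rw [qMultinomial_eq_zero _ _ hlt, zero_mul])]
  refine Eq.trans ?_ (multi hq hq1 k n x)
  refine Finset.sum_nbij' (fun r => fun j => (r j : ℕ))
    (fun t => fun j => (⟨t j % (n + 1), Nat.mod_lt _ (Nat.succ_pos n)⟩ : Fin (n + 1)))
    (fun r _ => Fintype.mem_piFinset.mpr fun j => Finset.mem_range.mpr (Fin.is_lt _))
    (fun t _ => Finset.mem_univ _) ?_ ?_ ?_
  · intro r _
    funext j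
    exact Fin.ext (Nat.mod_eq_of_lt (Fin.is_lt _))
  · intro t ht
    funext j
    have : t j < n + 1 := Finset.mem_range.mp (Fintype.mem_piFinset.mp ht j)
    simpa using Nat.mod_eq_of_lt this
  · intro r _
    rfl
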